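/- Fix an integer k ≥ 1 with k ≡ 0 or 2 (mod 3) and a sequence δ = (δ₁, …, δ_k) of positive real numbers. There exists a constant c > 0 such that for every integer n ≥ 1 there exist finite sets P₁, …, P_{k+1} ⊆ ℝ², each of cardinality at most n, for which the number of multipartite k-chains C_k(P₁, …, P_{k+1}) with respect to δ is at least c · n^{⌊(k+1)/3⌋ + 1}. -/

import Mathlib

open Real Finset

namespace Stmt3Aux


noncomputable def dd (k : ℕ) (δ : Fin k → ℝ) : ℕ → ℝ :=
  fun e => if h : e < k then δ ⟨e, h⟩ else 1

lemma dd_pos {k : ℕ} {δ : Fin k → ℝ} (hδ : ∀ i, 0 < δ i) (e : ℕ) : 0 < dd k δ e := by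
  unfold dd; split
  · exact hδ _
  · norm_num

lemma dd_fin {k : ℕ} {δ : Fin k → ℝ} (i : Fin k) : dd k δ i.1 = δ i := by
  unfold dd; rw [dif_pos i.2]

def xstep (e : ℕ) : Prop := e ≠ 0 ∧ e % 3 ≠ 2

instance : DecidablePred xstep := fun _ => instDecidableAnd

noncomputable def q (k : ℕ) (δ : Fin k → ℝ) (i : ℕ) : ℝ × ℝ :=
  (∑ e ∈ range i, if xstep e then dd k δ e else 0,
   ∑ e ∈ range i, if xstep e then 0 else dd k δ e)

lemma q_succ (k : ℕ) (δ : Fin k → ℝ) (e : ℕ) :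
    q k δ (e+1) = ((q k δ e).1 + (if xstep e then dd k δ e else 0),
                  (q k δ e).2 + (if xstep e then 0 else dd k δ e)) := by
  unfold q; simp [Finset.sum_range_succ]

lemma phi_q (k : ℕ) (δ : Fin k → ℝ) (i : ℕ) :
    (q k δ i).1 + (q k δ i).2 = ∑ e ∈ range i, dd k δ e := by
  unfold q
  rw [← Finset.sum_add_distrib]
  refine Finset.sum_congr rfl (fun e _ => ?_)
  by_cases h : xstep e <;> simp [h]

lemma phi_q_gap {k : ℕ} {δ : Fin k → ℝ} (hδ : ∀ i, 0 < δ i) {γ : ℝ}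
    (hγ : ∀ e, γ ≤ dd k δ e) {l i : ℕ} (h : l < i) :
    (q k δ l).1 + (q k δ l).2 + γ ≤ (q k δ i).1 + (q k δ i).2 := by
  rw [phi_q, phi_q]
  have h1 : ∑ e ∈ range i, dd k δ e - ∑ e ∈ range l, dd k δ e
      = ∑ e ∈ Finset.Ico l i, dd k δ e := by
    rw [Finset.sum_Ico_eq_sub _ h.le]
  have h2 : γ ≤ ∑ e ∈ Finset.Ico l i, dd k δ e := by
    calc γ ≤ dd k δ l := hγ l
    _ ≤ ∑ e ∈ Finset.Ico l i, dd k δ e :=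
      Finset.single_le_sum (fun e _ => (dd_pos hδ e).le) (by simp [h])
  linarith

noncomputable def emb (v : ℝ × ℝ) : EuclideanSpace ℝ (Fin 2) := WithLp.toLp 2 ![v.1, v.2]

lemma emb_inj : Function.Injective emb := by
  intro v w h
  have h1 := congrArg (fun x => x 0) h
  have h2 := congrArg (fun x => x 1) h
  simp [emb] at h1 h2
  exact Prod.ext h1 h2

lemma dist_emb (v w : ℝ × ℝ) :
    dist (emb v) (emb w) = Real.sqrt ((v.1 - w.1)^2 + (v.2 - w.2)^2) := by
  rw [EuclideanSpace.dist_eq]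
  simp [emb, Fin.sum_univ_two, Real.dist_eq, sq_abs]



noncomputable def sfun (a : ℝ) (A B : ℝ × ℝ) (t : ℝ) : ℝ :=
  (B.1 - (A.1 + a * Real.cos t))^2 + (B.2 - (A.2 + a * Real.sin t))^2

lemma sfun_cont (a : ℝ) (A B : ℝ × ℝ) : Continuous (sfun a A B) := by
  unfold sfun; fun_prop

noncomputable def xpt (a b c : ℝ) (A B : ℝ × ℝ) (t : ℝ) : ℝ × ℝ :=
  let P1 := A.1 + a * Real.cos t
  let P2 := A.2 + a * Real.sin t
  let u1 := B.1 - P1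
  let u2 := B.2 - P2
  let s := sfun a A B t
  let al := (s + b^2 - c^2) / (2*s)
  let be := Real.sqrt (b^2 * s - ((s + b^2 - c^2)/2)^2) / s
  (P1 + al * u1 - be * u2, P2 + al * u2 + be * u1)

lemma xpt_dist (a b c : ℝ) (hb : 0 ≤ b) (hc : 0 ≤ c) (A B : ℝ × ℝ) (t : ℝ)
    (h1 : (b - c)^2 < sfun a A B t) (h2 : sfun a A B t < (b + c)^2) :
    (((xpt a b c A B t).1 - (A.1 + a * Real.cos t))^2 +
      ((xpt a b c A B t).2 - (A.2 + a * Real.sin t))^2 = b^2) ∧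
    (((xpt a b c A B t).1 - B.1)^2 + ((xpt a b c A B t).2 - B.2)^2 = c^2) := by
  set P1 := A.1 + a * Real.cos t with hP1
  set P2 := A.2 + a * Real.sin t with hP2
  set s := sfun a A B t with hs
  have hu : (B.1 - P1)^2 + (B.2 - P2)^2 = s := by rw [hs]; rfl
  have hs0 : 0 < s := lt_of_le_of_lt (sq_nonneg _) h1
  have hE : 0 ≤ b^2 * s - ((s + b^2 - c^2)/2)^2 := by nlinarith [mul_pos (sub_pos.2 h2) (sub_pos.2 h1)]
  have hw : (Real.sqrt (b^2 * s - ((s + b^2 - c^2)/2)^2))^2 = b^2 * s - ((s + b^2 - c^2)/2)^2 :=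
    Real.sq_sqrt hE
  set w := Real.sqrt (b^2 * s - ((s + b^2 - c^2)/2)^2) with hwdef
  have hX1 : (xpt a b c A B t).1 = P1 + ((s + b^2 - c^2) / (2*s)) * (B.1 - P1) - (w/s) * (B.2 - P2) := rfl
  have hX2 : (xpt a b c A B t).2 = P2 + ((s + b^2 - c^2) / (2*s)) * (B.2 - P2) + (w/s) * (B.1 - P1) := rfl
  constructor
  · rw [hX1, hX2]
    have expand : (P1 + ((s + b^2 - c^2) / (2*s)) * (B.1 - P1) - (w/s) * (B.2 - P2) - P1)^2 +
        (P2 + ((s + b^2 - c^2) / (2*s)) * (B.2 - P2) + (w/s) * (B.1 - P1) - P2)^2 =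
        (((s + b^2 - c^2) / (2*s))^2 + (w/s)^2) * ((B.1 - P1)^2 + (B.2 - P2)^2) := by ring
    rw [expand, hu, div_pow, div_pow, hw]
    field_simp
    ring
  · rw [hX1, hX2]
    have hB1 : P1 + ((s + b^2 - c^2) / (2*s)) * (B.1 - P1) - (w/s) * (B.2 - P2) - B.1 =
        (((s + b^2 - c^2) / (2*s)) - 1) * (B.1 - P1) - (w/s) * (B.2 - P2) := by ring
    have hB2 : P2 + ((s + b^2 - c^2) / (2*s)) * (B.2 - P2) + (w/s) * (B.1 - P1) - B.2 =
        (((s + b^2 - c^2) / (2*s)) - 1) * (B.2 - P2) + (w/s) * (B.1 - P1) := by ring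
    rw [hB1, hB2]
    have expand : ((((s + b^2 - c^2) / (2*s)) - 1) * (B.1 - P1) - (w/s) * (B.2 - P2))^2 +
        ((((s + b^2 - c^2) / (2*s)) - 1) * (B.2 - P2) + (w/s) * (B.1 - P1))^2 =
        ((((s + b^2 - c^2) / (2*s)) - 1)^2 + (w/s)^2) * ((B.1 - P1)^2 + (B.2 - P2)^2) := by ring
    rw [expand, hu, div_pow, hw]
    field_simp
    ring

lemma sfun_zero (a b c : ℝ) (A : ℝ × ℝ) :
    sfun a A (A.1 + (a + c), A.2 + b) 0 = b^2 + c^2 := by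
  unfold sfun; simp; ring

lemma xpt_zero (a b c : ℝ) (hb : 0 ≤ b) (hc : 0 ≤ c) (hbc : 0 < b^2 + c^2) (A : ℝ × ℝ) :
    xpt a b c A (A.1 + (a + c), A.2 + b) 0 = (A.1 + a, A.2 + b) := by
  have hs := sfun_zero a b c A
  unfold xpt
  simp only [hs, Real.cos_zero, Real.sin_zero, mul_one, mul_zero]
  have h1 : b^2 * (b^2 + c^2) - ((b^2 + c^2 + b^2 - c^2)/2)^2 = (b*c)^2 := by ring
  rw [h1, Real.sqrt_sq (mul_nonneg hb hc)]
  have hne : b^2 + c^2 ≠ 0 := ne_of_gt hbc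
  rw [Prod.mk.injEq]
  constructor <;> (field_simp; ring)

lemma xpt_contAt (a b c : ℝ) (A B : ℝ × ℝ) (hs : sfun a A B 0 ≠ 0) :
    ContinuousAt (xpt a b c A B) 0 := by
  have hsc : ContinuousAt (sfun a A B) 0 := (sfun_cont a A B).continuousAt
  have hP1 : ContinuousAt (fun t => A.1 + a * Real.cos t) 0 := by fun_prop
  have hP2 : ContinuousAt (fun t => A.2 + a * Real.sin t) 0 := by fun_prop
  have hu1 : ContinuousAt (fun t => B.1 - (A.1 + a * Real.cos t)) 0 := by fun_prop
  have hu2 : ContinuousAt (fun t => B.2 - (A.2 + a * Real.sin t)) 0 := by fun_prop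
  have hal : ContinuousAt (fun t => (sfun a A B t + b^2 - c^2) / (2 * sfun a A B t)) 0 :=
    ContinuousAt.div (by fun_prop) (by fun_prop) (by simpa using hs)
  have hbe : ContinuousAt
      (fun t => Real.sqrt (b^2 * sfun a A B t - ((sfun a A B t + b^2 - c^2)/2)^2) / sfun a A B t) 0 :=
    ContinuousAt.div ((Real.continuous_sqrt.continuousAt).comp (by fun_prop)) hsc hs
  exact ContinuousAt.prodMk (by exact (hP1.add (hal.mul hu1)).sub (hbe.mul hu2))
    (by exact (hP2.add (hal.mul hu2)).add (hbe.mul hu1))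

lemma q_zero (k : ℕ) (δ : Fin k → ℝ) : q k δ 0 = (0, 0) := by simp [q]

lemma q_one (k : ℕ) (δ : Fin k → ℝ) : q k δ 1 = (0, dd k δ 0) := by
  have h := q_succ k δ 0
  rw [q_zero] at h
  rw [h, if_neg (by simp [xstep]), if_neg (by simp [xstep])]
  simp

lemma qB1 (k : ℕ) (δ : Fin k → ℝ) (j : ℕ) :
    q k δ (3*j+2) = ((q k δ (3*j+1)).1 + dd k δ (3*j+1), (q k δ (3*j+1)).2) := by
  have h := q_succ k δ (3*j+1)
  have hx : xstep (3*j+1) := ⟨by omega, by omega⟩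
  rw [show 3*j+1+1 = 3*j+2 from rfl] at h
  rw [h, if_pos hx, if_pos hx]; simp

lemma qB2 (k : ℕ) (δ : Fin k → ℝ) (j : ℕ) :
    q k δ (3*j+3) = ((q k δ (3*j+1)).1 + dd k δ (3*j+1),
                     (q k δ (3*j+1)).2 + dd k δ (3*j+2)) := by
  have h := q_succ k δ (3*j+2)
  have hx : ¬ xstep (3*j+2) := by simp only [xstep, not_and]; intro _; omega
  rw [show 3*j+2+1 = 3*j+3 from rfl] at h
  rw [h, if_neg hx, if_neg hx, qB1]; simp

lemma qB3 (k : ℕ) (δ : Fin k → ℝ) (j : ℕ) :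
    q k δ (3*j+4) = ((q k δ (3*j+1)).1 + (dd k δ (3*j+1) + dd k δ (3*j+3)),
                     (q k δ (3*j+1)).2 + dd k δ (3*j+2)) := by
  have h := q_succ k δ (3*j+3)
  have hx : xstep (3*j+3) := ⟨by omega, by omega⟩
  rw [show 3*j+3+1 = 3*j+4 from rfl] at h
  rw [h, if_pos hx, if_pos hx, qB2]; simp; ring


noncomputable def F (k : ℕ) (δ : Fin k → ℝ) (i : ℕ) (t : ℝ) : ℝ × ℝ :=
  if i = 0 then ((q k δ 1).1 + dd k δ 0 * Real.sin t, (q k δ 1).2 - dd k δ 0 * Real.cos t)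
  else if i % 3 = 1 then q k δ i
  else if i % 3 = 2 then
    ((q k δ (i-1)).1 + dd k δ (i-1) * Real.cos t, (q k δ (i-1)).2 + dd k δ (i-1) * Real.sin t)
  else if i = k then
    ((q k δ (k-2)).1 + dd k δ (k-2) * Real.cos t,
     (q k δ (k-2)).2 + dd k δ (k-2) * Real.sin t + dd k δ (k-1))
  else xpt (dd k δ (i-2)) (dd k δ (i-1)) (dd k δ i) (q k δ (i-2)) (q k δ (i+1)) t

variable {k : ℕ} {δ : Fin k → ℝ}

lemma F_zero (t : ℝ) :
    F k δ 0 t = ((q k δ 1).1 + dd k δ 0 * Real.sin t, (q k δ 1).2 - dd k δ 0 * Real.cos t) := by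
  simp [F]

lemma F_hub {i : ℕ} (h : i % 3 = 1) (t : ℝ) : F k δ i t = q k δ i := by
  have h0 : i ≠ 0 := by omega
  simp [F, h0, h]

lemma F_two {i : ℕ} (h : i % 3 = 2) (t : ℝ) :
    F k δ i t = ((q k δ (i-1)).1 + dd k δ (i-1) * Real.cos t,
                 (q k δ (i-1)).2 + dd k δ (i-1) * Real.sin t) := by
  have h0 : i ≠ 0 := by omega
  have h1 : i % 3 ≠ 1 := by omega
  simp [F, h0, h1, h]

lemma F_last (h3 : k % 3 = 0) (hk1 : k ≠ 0) (t : ℝ) :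
    F k δ k t = ((q k δ (k-2)).1 + dd k δ (k-2) * Real.cos t,
                 (q k δ (k-2)).2 + dd k δ (k-2) * Real.sin t + dd k δ (k-1)) := by
  have h1 : k % 3 ≠ 1 := by omega
  have h2 : k % 3 ≠ 2 := by omega
  simp [F, hk1, h1, h2]

lemma F_mid {i : ℕ} (h : i % 3 = 0) (h0 : i ≠ 0) (hik : i ≠ k) (t : ℝ) :
    F k δ i t = xpt (dd k δ (i-2)) (dd k δ (i-1)) (dd k δ i) (q k δ (i-2)) (q k δ (i+1)) t := by
  have h1 : i % 3 ≠ 1 := by omega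
  have h2 : i % 3 ≠ 2 := by omega
  simp [F, h0, h1, h2, hik]

/-- key geometric relation for interior pair-second vertices -/
lemma q_mid_rel {i : ℕ} (h : i % 3 = 0) (h0 : i ≠ 0) :
    q k δ (i+1) = ((q k δ (i-2)).1 + (dd k δ (i-2) + dd k δ i),
                   (q k δ (i-2)).2 + dd k δ (i-1)) := by
  obtain ⟨j, rfl⟩ : ∃ j, i = 3*j+3 := ⟨i/3 - 1, by omega⟩
  have e1 : 3*j+3+1 = 3*j+4 := rfl
  have e2 : 3*j+3-2 = 3*j+1 := rfl
  have e3 : 3*j+3-1 = 3*j+2 := rfl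
  rw [e1, e2, e3, qB3]

lemma F_at_zero (hδ : ∀ i, 0 < δ i) {i : ℕ} (hik : i ≤ k) (hkmod : k % 3 = 0 ∨ k % 3 = 2) :
    F k δ i 0 = q k δ i := by
  rcases Nat.eq_zero_or_pos i with rfl | hipos
  · rw [F_zero, q_one, q_zero]; simp
  rcases Nat.lt_or_ge (i % 3) 2 with hlt | hge
  · interval_cases h : i % 3
    · -- i % 3 = 0, i ≠ 0
      rcases eq_or_ne i k with rfl | hik'
      · rw [F_last h (by omega)]
        obtain ⟨j, rfl⟩ : ∃ j, i = 3*j+3 := ⟨i/3 - 1, by omega⟩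
        rw [show 3*j+3-2 = 3*j+1 from rfl, show 3*j+3-1 = 3*j+2 from rfl, qB2]
        simp
      · rw [F_mid h (by omega) hik', q_mid_rel h (by omega)]
        have hb : (0:ℝ) < dd k δ (i-1) := dd_pos hδ _
        have hc : (0:ℝ) < dd k δ i := dd_pos hδ _
        have := xpt_zero (dd k δ (i-2)) (dd k δ (i-1)) (dd k δ i) hb.le hc.le
          (by positivity) (q k δ (i-2))
        rw [show ((q k δ (i-2)).1 + (dd k δ (i-2) + dd k δ i), (q k δ (i-2)).2 + dd k δ (i-1))
            = ((q k δ (i-2)).1 + (dd k δ (i-2) + dd k δ i), (q k δ (i-2)).2 + dd k δ (i-1)) from rfl]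
        rw [this]
        obtain ⟨j, rfl⟩ : ∃ j, i = 3*j+3 := ⟨i/3 - 1, by omega⟩
        rw [show 3*j+3-2 = 3*j+1 from rfl, show 3*j+3-1 = 3*j+2 from rfl, qB2]
    · exact F_hub h 0
  · have h : i % 3 = 2 := by omega
    rw [F_two h]
    obtain ⟨j, rfl⟩ : ∃ j, i = 3*j+2 := ⟨i/3, by omega⟩
    rw [show 3*j+2-1 = 3*j+1 from rfl, qB1]
    simp

lemma F_last' {i : ℕ} (hik : i = k) (h3 : i % 3 = 0) (h0 : i ≠ 0) (t : ℝ) :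
    F k δ i t = ((q k δ (i-2)).1 + dd k δ (i-2) * Real.cos t,
                 (q k δ (i-2)).2 + dd k δ (i-2) * Real.sin t + dd k δ (i-1)) := by
  subst hik; exact F_last h3 h0 t

lemma F_contAt (hδ : ∀ i, 0 < δ i) {i : ℕ} : ContinuousAt (F k δ i) 0 := by
  rcases Nat.eq_zero_or_pos i with rfl | hipos
  · rw [show F k δ 0 = fun t => ((q k δ 1).1 + dd k δ 0 * Real.sin t,
      (q k δ 1).2 - dd k δ 0 * Real.cos t) from funext (fun t => F_zero t)]
    fun_prop
  rcases Nat.lt_or_ge (i % 3) 2 with hlt | hge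
  · interval_cases h : i % 3
    · rcases eq_or_ne i k with hik' | hik'
      · rw [show F k δ i = fun t => ((q k δ (i-2)).1 + dd k δ (i-2) * Real.cos t,
          (q k δ (i-2)).2 + dd k δ (i-2) * Real.sin t + dd k δ (i-1))
          from funext (fun t => F_last' hik' h (by omega) t)]
        fun_prop
      · rw [show F k δ i = xpt (dd k δ (i-2)) (dd k δ (i-1)) (dd k δ i) (q k δ (i-2)) (q k δ (i+1))
          from funext (fun t => F_mid h (by omega) hik' t)]
        apply xpt_contAt
        rw [q_mid_rel h (by omega), sfun_zero]
        have hb : (0:ℝ) < dd k δ (i-1) := dd_pos hδ _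
        have hc : (0:ℝ) < dd k δ i := dd_pos hδ _
        positivity
    · rw [show F k δ i = fun _ => q k δ i from funext (fun t => F_hub h t)]
      exact continuousAt_const
  · have h : i % 3 = 2 := by omega
    rw [show F k δ i = fun t => ((q k δ (i-1)).1 + dd k δ (i-1) * Real.cos t,
      (q k δ (i-1)).2 + dd k δ (i-1) * Real.sin t) from funext (fun t => F_two h t)]
    fun_prop


def pidx (i : ℕ) : ℕ := if i = 0 then 0 else if i % 3 = 2 then (i+1)/3 else i/3

def Pred (k : ℕ) (δ : Fin k → ℝ) (ε : ℝ) (i : ℕ) (t : ℝ) : Prop :=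
  (|(F k δ i t).1 - (q k δ i).1| < ε ∧ |(F k δ i t).2 - (q k δ i).2| < ε) ∧
  (i % 3 = 0 → i ≠ 0 → i ≠ k →
    ((dd k δ (i-1) - dd k δ i)^2 < sfun (dd k δ (i-2)) (q k δ (i-2)) (q k δ (i+1)) t ∧
     sfun (dd k δ (i-2)) (q k δ (i-2)) (q k δ (i+1)) t < (dd k δ (i-1) + dd k δ i)^2))

lemma pred_eventually (hkmod : k % 3 = 0 ∨ k % 3 = 2) (hδ : ∀ i, 0 < δ i)
    (ε : ℝ) (hε : 0 < ε) (i : ℕ) (hik : i ≤ k) :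
    ∀ᶠ t in nhds (0:ℝ), Pred k δ ε i t := by
  refine Filter.Eventually.and ?_ ?_
  · have hc : ContinuousAt (F k δ i) 0 := F_contAt hδ
    rw [ContinuousAt, F_at_zero hδ hik hkmod] at hc
    have h := Metric.tendsto_nhds.mp hc ε hε
    refine h.mono (fun t ht => ?_)
    rw [Prod.dist_eq, max_lt_iff] at ht
    rw [← Real.dist_eq, ← Real.dist_eq]
    exact ⟨ht.1, ht.2⟩
  · by_cases hc3 : i % 3 = 0 ∧ i ≠ 0 ∧ i ≠ k
    · obtain ⟨h3, h0, hk'⟩ := hc3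
      have hb : 0 < dd k δ (i-1) := dd_pos hδ _
      have hcp : 0 < dd k δ i := dd_pos hδ _
      have hval : sfun (dd k δ (i-2)) (q k δ (i-2)) (q k δ (i+1)) 0
          = (dd k δ (i-1))^2 + (dd k δ i)^2 := by
        rw [q_mid_rel h3 h0]; exact sfun_zero _ _ _ _
      have hcont : ContinuousAt (sfun (dd k δ (i-2)) (q k δ (i-2)) (q k δ (i+1))) 0 :=
        (sfun_cont _ _ _).continuousAt
      rw [ContinuousAt, hval] at hcont
      have h1 : (dd k δ (i-1) - dd k δ i)^2 < (dd k δ (i-1))^2 + (dd k δ i)^2 := by nlinarith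
      have h2 : (dd k δ (i-1))^2 + (dd k δ i)^2 < (dd k δ (i-1) + dd k δ i)^2 := by nlinarith
      have hmem := hcont (Ioo_mem_nhds h1 h2)
      refine Filter.eventually_of_mem hmem (fun t ht => fun _ _ _ => ?_)
      exact ⟨ht.1, ht.2⟩
    · refine Filter.Eventually.of_forall (fun t => ?_)
      intro ha hb hc'
      exact absurd ⟨ha, hb, hc'⟩ hc3


lemma exists_good (hk : 1 ≤ k) (hkmod : k % 3 = 0 ∨ k % 3 = 2) (hδ : ∀ i, 0 < δ i)
    (n : ℕ) (hn : 1 ≤ n) :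
    ∃ g : ((Fin ((k+1)/3+1)) → Fin n) → ℕ → ℝ × ℝ, ∃ T : ℕ → Finset (ℝ × ℝ),
      (∀ i, (T i).card ≤ n) ∧
      (∀ σ i, i ≤ k → g σ i ∈ T i) ∧
      (∀ σ i l, i ≤ k → l ≤ k → i < l → g σ i ≠ g σ l) ∧
      (∀ σ e, e < k →
        ((g σ e).1 - (g σ (e+1)).1)^2 + ((g σ e).2 - (g σ (e+1)).2)^2 = (dd k δ e)^2) ∧
      (∀ σ σ', (∀ i, i ≤ k → g σ i = g σ' i) → σ = σ') := by
  classical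
  set m := (k+1)/3+1 with hm
  have hm0 : 0 < m := Nat.succ_pos _
  have hne : (Finset.univ : Finset (Fin k)).Nonempty := ⟨⟨0, hk⟩, Finset.mem_univ _⟩
  set γ : ℝ := min 1 (Finset.univ.inf' hne δ) with hγdef
  have hγ0 : 0 < γ := lt_min one_pos (by rw [Finset.lt_inf'_iff]; exact fun i _ => hδ i)
  have hγle : ∀ e, γ ≤ dd k δ e := by
    intro e; unfold dd; split
    · exact le_trans (min_le_right _ _) (Finset.inf'_le _ (Finset.mem_univ _))
    · exact min_le_left _ _
  set ε : ℝ := γ/5 with hεdef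
  have hε : 0 < ε := by positivity
  have hev : ∀ᶠ t in nhds (0:ℝ),
      (∀ i ∈ Finset.range (k+1), Pred k δ ε i t) ∧ |t| < Real.pi/2 := by
    refine Filter.Eventually.and ?_ ?_
    · rw [Filter.eventually_all_finset]
      intro i hi
      exact pred_eventually hkmod hδ ε hε i (by simp only [Finset.mem_range] at hi; omega)
    · have hmem : Set.Ioo (-(Real.pi/2)) (Real.pi/2) ∈ nhds (0:ℝ) :=
        Ioo_mem_nhds (by linarith [Real.pi_pos]) (by linarith [Real.pi_pos])
      exact Filter.eventually_of_mem hmem (fun t ht => abs_lt.2 ⟨ht.1, ht.2⟩)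
  obtain ⟨r, hr0, hr⟩ := Metric.eventually_nhds_iff.mp hev
  set τ : Fin n → ℝ := fun l => r * (l.1 + 1) / (2*n) with hτdef
  have hτpos : ∀ l, 0 < τ l := by
    intro l
    have h1 : (0:ℝ) < (l.1:ℝ) + 1 := by positivity
    have h2 : (0:ℝ) < 2*(n:ℝ) := by positivity
    exact div_pos (mul_pos hr0 h1) h2
  have hτlt : ∀ l, τ l < r := by
    intro l
    rw [hτdef]
    simp only
    rw [div_lt_iff₀ (by positivity : (0:ℝ) < 2*(n:ℝ))]
    have h1 : ((l.1:ℝ)+1) ≤ (n:ℝ) := by exact_mod_cast Nat.succ_le_of_lt l.2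
    nlinarith [(show (1:ℝ) ≤ (n:ℝ) by exact_mod_cast hn)]
  have hτdist : ∀ l, dist (τ l) 0 < r := by
    intro l; rw [Real.dist_eq, sub_zero, abs_of_pos (hτpos l)]; exact hτlt l
  have hPred : ∀ (l : Fin n) i, i ≤ k → Pred k δ ε i (τ l) := fun l i hik =>
    (hr (hτdist l)).1 i (Finset.mem_range.2 (Nat.lt_succ_of_le hik))
  have hτpi : ∀ l, τ l < Real.pi/2 := fun l => (abs_lt.1 (hr (hτdist l)).2).2
  have hτinj : Function.Injective τ := by
    intro l l' h
    rw [hτdef] at h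
    simp only at h
    have h2n : (2*(n:ℝ)) ≠ 0 := by positivity
    rw [div_eq_div_iff (by positivity) (by positivity)] at h
    have h4 := mul_right_cancel₀ h2n h
    have h5 := mul_left_cancel₀ (ne_of_gt hr0) h4
    have h6 : (l.1:ℝ) = (l'.1:ℝ) := by linarith
    exact Fin.ext (by exact_mod_cast h6)
  set uu : (Fin m → Fin n) → ℕ → ℝ :=
    fun σ j => if h : j < m then τ (σ ⟨j, h⟩) else τ (σ ⟨0, hm0⟩) with huudef
  have huuτ : ∀ σ j, ∃ l, uu σ j = τ l := by
    intro σ j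
    by_cases h : j < m
    · exact ⟨σ ⟨j, h⟩, by rw [huudef]; simp [h]⟩
    · exact ⟨σ ⟨0, hm0⟩, by rw [huudef]; simp [h]⟩
  have huueq : ∀ σ j (h : j < m), uu σ j = τ (σ ⟨j, h⟩) := by
    intro σ j h; rw [huudef]; simp [h]
  set g : (Fin m → Fin n) → ℕ → ℝ × ℝ := fun σ i => F k δ i (uu σ (pidx i)) with hgdef
  have hPredg : ∀ σ i, i ≤ k → Pred k δ ε i (uu σ (pidx i)) := by
    intro σ i hik
    obtain ⟨l, hl⟩ := huuτ σ (pidx i)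
    rw [hl]; exact hPred l i hik
  refine ⟨g, fun i => Finset.image (fun l => F k δ i (τ l)) Finset.univ, ?_, ?_, ?_, ?_, ?_⟩
  · intro i
    exact le_trans Finset.card_image_le (by simp)
  · intro σ i hik
    obtain ⟨l, hl⟩ := huuτ σ (pidx i)
    exact Finset.mem_image.2 ⟨l, Finset.mem_univ _, by rw [hgdef]; simp only; rw [hl]⟩
  · intro σ i l hik hlk hil heq
    have hi := (hPredg σ i hik).1
    have hl' := (hPredg σ l hlk).1
    have hgap := phi_q_gap hδ hγle hil
    have e1 : (F k δ i (uu σ (pidx i))).1 = (F k δ l (uu σ (pidx l))).1 := by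
      rw [hgdef] at heq; exact congrArg Prod.fst heq
    have e2 : (F k δ i (uu σ (pidx i))).2 = (F k δ l (uu σ (pidx l))).2 := by
      rw [hgdef] at heq; exact congrArg Prod.snd heq
    obtain ⟨a1, a2⟩ := hi
    obtain ⟨b1, b2⟩ := hl'
    rw [abs_lt] at a1 a2 b1 b2
    rw [hεdef] at a1 a2 b1 b2
    linarith [a1.1, a1.2, a2.1, a2.2, b1.1, b1.2, b2.1, b2.2]
  · intro σ e he
    rw [hgdef]; simp only
    rcases Nat.eq_zero_or_pos e with rfl | hepos
    · rw [F_zero, F_hub (show 1 % 3 = 1 from rfl)]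
      linear_combination (dd k δ 0)^2 * Real.sin_sq_add_cos_sq (uu σ (pidx 0))
    rcases (show e % 3 = 0 ∨ e % 3 = 1 ∨ e % 3 = 2 by omega) with h3 | h3 | h3
    · have hek : e ≠ k := by omega
      have hsb := (hPredg σ e (le_of_lt he)).2 h3 (by omega) hek
      have hd := (xpt_dist (dd k δ (e-2)) (dd k δ (e-1)) (dd k δ e)
        (dd_pos hδ _).le (dd_pos hδ _).le (q k δ (e-2)) (q k δ (e+1))
        (uu σ (pidx e)) hsb.1 hsb.2).2
      rw [F_mid h3 (by omega) hek, F_hub (show (e+1) % 3 = 1 by omega)]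
      linear_combination hd
    · rw [F_hub h3, F_two (show (e+1) % 3 = 2 by omega)]
      rw [show e+1-1 = e from rfl]
      linear_combination (dd k δ e)^2 * Real.sin_sq_add_cos_sq (uu σ (pidx (e+1)))
    · have hpe : pidx (e+1) = pidx e := by
        simp only [pidx]; split_ifs <;> first | omega | tauto
      rw [hpe]
      rcases eq_or_ne (e+1) k with hek | hek
      · have hk3 : k % 3 = 0 := by omega
        have hl : F k δ (e+1) (uu σ (pidx e)) =
            ((q k δ (e-1)).1 + dd k δ (e-1) * Real.cos (uu σ (pidx e)),
             (q k δ (e-1)).2 + dd k δ (e-1) * Real.sin (uu σ (pidx e)) + dd k δ e) := by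
          rw [hek, F_last hk3 (by omega)]
          rw [show k-2 = e-1 from by omega, show k-1 = e from by omega]
        rw [hl, F_two h3]
        ring
      · have hnext3 : (e+1) % 3 = 0 := by omega
        have hmid := F_mid (δ:=δ) hnext3 (by omega) hek (uu σ (pidx e))
        rw [show e+1-2 = e-1 from by omega, show e+1-1 = e from rfl] at hmid
        have hsb := (hPredg σ (e+1) (by omega)).2 hnext3 (by omega) hek
        rw [show e+1-2 = e-1 from by omega, show e+1-1 = e from rfl, hpe] at hsb
        have hd := (xpt_dist (dd k δ (e-1)) (dd k δ e) (dd k δ (e+1))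
          (dd_pos hδ _).le (dd_pos hδ _).le (q k δ (e-1)) (q k δ (e+1+1))
          (uu σ (pidx e)) hsb.1 hsb.2).1
        rw [F_two h3, hmid]
        linear_combination hd
  · intro σ σ' hσ
    have hsinrec : ∀ (l l' : Fin n), Real.sin (τ l) = Real.sin (τ l') → l = l' := by
      intro l l' hs
      refine hτinj (Real.injOn_sin ?_ ?_ hs)
      · exact ⟨by linarith [hτpos l, Real.pi_pos], (hτpi l).le⟩
      · exact ⟨by linarith [hτpos l', Real.pi_pos], (hτpi l').le⟩
    funext j
    rcases j with ⟨jv, hjv⟩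
    rcases Nat.eq_zero_or_pos jv with rfl | hjvpos
    · have h := hσ 0 (by omega)
      rw [hgdef] at h
      simp only at h
      rw [F_zero, F_zero, show pidx 0 = 0 from rfl, huueq σ 0 hm0, huueq σ' 0 hm0,
        Prod.mk.injEq] at h
      have hd0 : (0:ℝ) < dd k δ 0 := dd_pos hδ 0
      have hsin : Real.sin (τ (σ ⟨0, hm0⟩)) = Real.sin (τ (σ' ⟨0, hm0⟩)) :=
        mul_left_cancel₀ (ne_of_gt hd0) (by linarith [h.1])
      exact hsinrec _ _ hsin
    · set i := 3*jv - 1 with hidef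
      have hik : i ≤ k := by omega
      have hi3 : i % 3 = 2 := by omega
      have hpidxi : pidx i = jv := by
        simp only [pidx, hidef]; split_ifs <;> first | omega | tauto
      have h := hσ i hik
      rw [hgdef] at h
      simp only at h
      rw [F_two hi3, F_two hi3, hpidxi, huueq σ jv hjv, huueq σ' jv hjv,
        Prod.mk.injEq] at h
      have hd0 : (0:ℝ) < dd k δ (i-1) := dd_pos hδ _
      have hsin : Real.sin (τ (σ ⟨jv, hjv⟩)) = Real.sin (τ (σ' ⟨jv, hjv⟩)) :=
        mul_left_cancel₀ (ne_of_gt hd0) (by linarith [h.2])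
      exact hsinrec _ _ hsin


end Stmt3Aux

/-- The number of multipartite `k`-chains with respect to `δ` with `i`-th point in `P i`:
`(k+1)`-tuples of pairwise distinct points with consecutive distances `δ i`. -/
noncomputable def chainCount (d k : ℕ) (δ : Fin k → ℝ)
    (P : Fin (k + 1) → Set (EuclideanSpace ℝ (Fin d))) : ℕ :=
  Set.ncard {p : Fin (k + 1) → EuclideanSpace ℝ (Fin d) |
    Function.Injective p ∧ (∀ i, p i ∈ P i) ∧
    ∀ i : Fin k, dist (p i.castSucc) (p i.succ) = δ i}

theorem stmt_3 (k : ℕ) (hk : 1 ≤ k) (hkmod : k % 3 = 0 ∨ k % 3 = 2)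
    (δ : Fin k → ℝ) (hδ : ∀ i, 0 < δ i) :
    ∃ c > (0 : ℝ), ∀ n : ℕ, 1 ≤ n →
      ∃ P : Fin (k + 1) → Finset (EuclideanSpace ℝ (Fin 2)),
        (∀ i, (P i).card ≤ n) ∧
        c * (n : ℝ) ^ ((k + 1) / 3 + 1 : ℕ) ≤
          (chainCount 2 k δ (fun i => (P i : Set (EuclideanSpace ℝ (Fin 2)))) : ℝ) := by
  classical
  refine ⟨1, one_pos, ?_⟩
  intro n hn
  obtain ⟨g, T, hT, hmem, hdist, hedge, hinj⟩ := Stmt3Aux.exists_good hk hkmod hδ n hn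
  refine ⟨fun i => (T i.1).image Stmt3Aux.emb,
    fun i => le_trans Finset.card_image_le (hT i.1), ?_⟩
  set Φ : (Fin ((k+1)/3+1) → Fin n) → (Fin (k+1) → EuclideanSpace ℝ (Fin 2)) :=
    fun σ i => Stmt3Aux.emb (g σ i.1) with hΦ
  have hΦinj : Function.Injective Φ := by
    intro σ σ' h
    refine hinj σ σ' (fun i hik => Stmt3Aux.emb_inj ?_)
    exact congrFun h ⟨i, Nat.lt_succ_of_le hik⟩
  set SS : Set (Fin (k + 1) → EuclideanSpace ℝ (Fin 2)) :=
    {p : Fin (k + 1) → EuclideanSpace ℝ (Fin 2) |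
      Function.Injective p ∧
      (∀ i, p i ∈ ((fun i => (((T i.1).image Stmt3Aux.emb : Finset (EuclideanSpace ℝ (Fin 2))) :
          Set (EuclideanSpace ℝ (Fin 2)))) i)) ∧
      ∀ i : Fin k, dist (p i.castSucc) (p i.succ) = δ i} with hSS
  have hsub : Set.range Φ ⊆ SS := by
    rintro p ⟨σ, rfl⟩
    refine ⟨?_, ?_, ?_⟩
    · intro i j hij
      have hg : g σ i.1 = g σ j.1 := Stmt3Aux.emb_inj hij
      by_contra hne
      have hne' : i.1 ≠ j.1 := fun h => hne (Fin.ext h)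
      have hik : i.1 ≤ k := Nat.lt_succ_iff.1 i.2
      have hjk : j.1 ≤ k := Nat.lt_succ_iff.1 j.2
      rcases Nat.lt_or_ge i.1 j.1 with hlt | hge
      · exact hdist σ i.1 j.1 hik hjk hlt hg
      · exact hdist σ j.1 i.1 hjk hik (by omega) hg.symm
    · intro i
      exact Finset.mem_coe.2 (Finset.mem_image_of_mem _ (hmem σ i.1 (Nat.lt_succ_iff.1 i.2)))
    · intro i
      have he := hedge σ i.1 i.2
      simp only [hΦ]
      rw [Stmt3Aux.dist_emb]
      rw [Fin.coe_castSucc, Fin.val_succ, he, Stmt3Aux.dd_fin i]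
      exact Real.sqrt_sq (hδ i).le
  have hfin : SS.Finite := by
    refine Set.Finite.subset (Set.Finite.pi (fun i : Fin (k+1) =>
      ((T i.1).image Stmt3Aux.emb).finite_toSet)) ?_
    intro p hp
    rw [Set.mem_univ_pi]
    exact fun i => hp.2.1 i
  have h1 : (Set.range Φ).ncard = n^((k+1)/3+1) := by
    rw [← Set.image_univ, Set.ncard_image_of_injective _ hΦinj, Set.ncard_univ,
      Nat.card_eq_fintype_card]
    simp
  have h2 : n^((k+1)/3+1) ≤ chainCount 2 k δ (fun i => (((T i.1).image Stmt3Aux.emb : Finset _) :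
      Set (EuclideanSpace ℝ (Fin 2)))) := by
    rw [← h1]
    exact Set.ncard_le_ncard hsub hfin
  calc (1:ℝ) * (n:ℝ)^((k+1)/3+1) = ((n^((k+1)/3+1) : ℕ) : ℝ) := by push_cast; ring
  _ ≤ _ := by exact_mod_cast h2
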